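/- Let H₁, H₂ be finite-dimensional complex Hilbert spaces and U a unitary on H₁ ⊗ H₂. Suppose that for every density matrix ρ on H₁ ⊗ H₂ and every Hermitian operator A on H₁ with spectral projections (Π_x), one has Tr₁( ∑_x U (Π_x ⊗ 1) ρ (Π_x ⊗ 1) U† ) = Tr₁(U ρ U†). Then there exist unitaries U₁ on H₁ and U₂ on H₂ such that U = U₁ ⊗ U₂. -/

import Mathlib

open Matrix Kronecker BigOperators
open scoped ComplexOrder

noncomputable section
set_option linter.unusedSectionVars false

/-- Partial trace over the first tensor factor. -/
def ptrace1 {n m : Type} [Fintype n] (ρ : Matrix (n × m) (n × m) ℂ) : Matrix m m ℂ :=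
  Matrix.of fun k l => ∑ i, ρ (i, k) (i, l)

/-- A density matrix: positive semidefinite with trace one. -/
def IsDensityMatrix {d : Type} [Fintype d] [DecidableEq d] (ρ : Matrix d d ℂ) : Prop :=
  ρ.PosSemidef ∧ ρ.trace = 1

/-- A complete family of mutually orthogonal Hermitian projections. -/
def IsProjFamily {n ι : Type} [Fintype n] [DecidableEq n] [Fintype ι] [DecidableEq ι]
    (P : ι → Matrix n n ℂ) : Prop :=
  (∀ i, (P i).IsHermitian) ∧ (∀ i j, P i * P j = if i = j then P i else 0) ∧ ∑ i, P i = 1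

/-- `(P, μ)` is the spectral decomposition of the Hermitian operator `A`. -/
def IsSpectralDecomp {n ι : Type} [Fintype n] [DecidableEq n] [Fintype ι] [DecidableEq ι]
    (A : Matrix n n ℂ) (P : ι → Matrix n n ℂ) (μ : ι → ℝ) : Prop :=
  IsProjFamily P ∧ Function.Injective μ ∧ A = ∑ i, (μ i : ℂ) • P i

/-! ### Auxiliary definitions and lemmas -/

/-- Rank-one operator `|v⟩⟨w|`. -/
def MCouter {d : Type} (v w : d → ℂ) : Matrix d d ℂ :=
  Matrix.of fun q r => v q * (starRingEnd ℂ) (w r)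

/-- The vector `e ⊗ δ_k`. -/
def MCevec {n m : Type} [DecidableEq m] (e : n → ℂ) (k : m) : n × m → ℂ :=
  fun q => if q.2 = k then e q.1 else 0

/-- The block `A_{k,a}` of `U`: `(A_{k,a}) p i = U (p,a) (i,k)`. -/
def MCblock {n m : Type} (U : Matrix (n × m) (n × m) ℂ) (k a : m) : Matrix n n ℂ :=
  Matrix.of fun p i => U (p, a) (i, k)

section Aux

variable {n m d : Type} [Fintype n] [DecidableEq n] [Fintype m] [DecidableEq m] [Fintype d]

lemma ptrace1_add (A B : Matrix (n × m) (n × m) ℂ) :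
    ptrace1 (A + B) = ptrace1 A + ptrace1 B := by
  ext k l; simp [ptrace1, Finset.sum_add_distrib]

lemma ptrace1_smul (c : ℂ) (A : Matrix (n × m) (n × m) ℂ) :
    ptrace1 (c • A) = c • ptrace1 A := by
  ext k l; simp [ptrace1, Finset.mul_sum]

lemma ptrace1_zero : ptrace1 (0 : Matrix (n × m) (n × m) ℂ) = 0 := by
  ext k l; simp [ptrace1]

lemma ptrace1_sub (A B : Matrix (n × m) (n × m) ℂ) :
    ptrace1 (A - B) = ptrace1 A - ptrace1 B := by
  ext k l; simp [ptrace1, Finset.sum_sub_distrib]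

lemma MCouter_zero_left (y : d → ℂ) : MCouter (0 : d → ℂ) y = 0 := by
  ext q r; simp [MCouter]

lemma MCouter_zero_right (x : d → ℂ) : MCouter x (0 : d → ℂ) = 0 := by
  ext q r; simp [MCouter]

lemma mul_MCouter_mul (M N : Matrix d d ℂ) (x y : d → ℂ) :
    M * MCouter x y * N = MCouter (M.mulVec x) (Nᴴ.mulVec y) := by
  ext q r
  trans (∑ t, M q t * x t) * (∑ s, N s r * (starRingEnd ℂ) (y s))
  · simp only [Matrix.mul_apply, MCouter, Matrix.of_apply, Finset.sum_mul, Finset.mul_sum]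
    apply Finset.sum_congr rfl; intro t _
    apply Finset.sum_congr rfl; intro s _
    ring
  · simp only [MCouter, Matrix.of_apply, Matrix.mulVec, dotProduct,
      Matrix.conjTranspose_apply, map_sum, starRingEnd_apply, StarMul.star_mul, star_star]
    congr 1
    apply Finset.sum_congr rfl; intro s _
    ring

lemma kron1_conjTranspose (P : Matrix n n ℂ) :
    (P ⊗ₖ (1 : Matrix m m ℂ))ᴴ = Pᴴ ⊗ₖ (1 : Matrix m m ℂ) := by
  ext q r
  simp [Matrix.conjTranspose_apply, Matrix.kroneckerMap_apply, Matrix.one_apply, eq_comm,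
    apply_ite (starRingEnd ℂ)]

lemma kron1_mulVec_MCevec (P : Matrix n n ℂ) (e : n → ℂ) (k : m) :
    (P ⊗ₖ (1 : Matrix m m ℂ)).mulVec (MCevec e k) = MCevec (P.mulVec e) k := by
  ext q
  obtain ⟨p, a⟩ := q
  simp only [Matrix.mulVec, dotProduct, Fintype.sum_prod_type, MCevec,
    Matrix.kroneckerMap_apply, Matrix.one_apply, mul_ite, mul_zero, mul_one, ite_mul, zero_mul]
  simp [Finset.sum_ite_eq, MCevec, Finset.mul_sum]

lemma mulVec_MCevec (U : Matrix (n × m) (n × m) ℂ) (e : n → ℂ) (k : m) (p : n) (a : m) :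
    U.mulVec (MCevec e k) (p, a) = ((MCblock U k a).mulVec e) p := by
  simp only [Matrix.mulVec, dotProduct, Fintype.sum_prod_type, MCevec, MCblock,
    Matrix.of_apply, mul_ite, mul_zero]
  simp [Finset.sum_ite_eq]

lemma MCgamma_real (e : n → ℂ) :
    (∑ i, (starRingEnd ℂ) (e i) * e i) = ((∑ i, Complex.normSq (e i) : ℝ) : ℂ) := by
  push_cast
  exact Finset.sum_congr rfl fun i _ => Complex.normSq_eq_conj_mul_self.symm

lemma MCgamma_pos {e : n → ℂ} (he : e ≠ 0) : 0 < ∑ i, Complex.normSq (e i) := by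
  obtain ⟨i, hi⟩ : ∃ i, e i ≠ 0 := by
    by_contra h; push_neg at h; exact he (funext h)
  exact Finset.sum_pos' (fun j _ => Complex.normSq_nonneg _)
    ⟨i, Finset.mem_univ i, Complex.normSq_pos.2 hi⟩

lemma MCgamma_ne_zero {e : n → ℂ} (he : e ≠ 0) :
    (∑ i, (starRingEnd ℂ) (e i) * e i) ≠ 0 := by
  rw [MCgamma_real]
  exact_mod_cast ne_of_gt (MCgamma_pos he)

lemma MCouter_mul_MCouter (e : n → ℂ) :
    MCouter e e * MCouter e e = (∑ i, (starRingEnd ℂ) (e i) * e i) • MCouter e e := by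
  ext i j
  simp only [MCouter, Matrix.mul_apply, Matrix.of_apply, Matrix.smul_apply, smul_eq_mul,
    Finset.sum_mul]
  apply Finset.sum_congr rfl; intro t _
  ring

lemma MCouter_herm (e : n → ℂ) (c : ℂ) (hc : (starRingEnd ℂ) c = c) :
    (c • MCouter e e).IsHermitian := by
  ext i j
  simp only [Matrix.conjTranspose_apply, Matrix.smul_apply, MCouter, Matrix.of_apply,
    smul_eq_mul, star_mul', starRingEnd_apply, star_star]
  rw [← starRingEnd_apply, hc]
  ring

lemma MCouter_mulVec (e f : n → ℂ) (p : n) :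
    (MCouter e e).mulVec f p = e p * ∑ j, (starRingEnd ℂ) (e j) * f j := by
  simp only [Matrix.mulVec, dotProduct, MCouter, Matrix.of_apply, Finset.mul_sum]
  apply Finset.sum_congr rfl; intro t _
  ring

lemma MCproj_spectral (e : n → ℂ) (he : e ≠ 0) :
    IsSpectralDecomp ((∑ i, (starRingEnd ℂ) (e i) * e i)⁻¹ • MCouter e e)
      ![(∑ i, (starRingEnd ℂ) (e i) * e i)⁻¹ • MCouter e e,
        1 - (∑ i, (starRingEnd ℂ) (e i) * e i)⁻¹ • MCouter e e] ![1, 0] := by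
  set γ : ℂ := ∑ i, (starRingEnd ℂ) (e i) * e i with hγ
  have hγ0 : γ ≠ 0 := MCgamma_ne_zero he
  have hγstar : (starRingEnd ℂ) (γ⁻¹) = γ⁻¹ := by
    rw [map_inv₀]
    congr 1
    rw [hγ, MCgamma_real]
    exact Complex.conj_ofReal _
  set P0 : Matrix n n ℂ := γ⁻¹ • MCouter e e with hP0
  have hherm : P0.IsHermitian := MCouter_herm e _ hγstar
  have hidem : P0 * P0 = P0 := by
    rw [hP0, Matrix.smul_mul, Matrix.mul_smul, MCouter_mul_MCouter, ← hγ, smul_smul, smul_smul]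
    congr 1
    field_simp
  refine ⟨⟨?_, ?_, ?_⟩, ?_, ?_⟩
  · intro i
    fin_cases i
    · exact hherm
    · simpa using Matrix.IsHermitian.sub Matrix.isHermitian_one hherm
  · intro i j
    fin_cases i <;> fin_cases j <;>
      simp [Matrix.mul_sub, Matrix.sub_mul, hidem]
  · simp [Fin.sum_univ_two]
  · intro i j h
    fin_cases i <;> fin_cases j <;> simp_all
  · simp [Fin.sum_univ_two]

lemma MCouter_polar (x y : n → ℂ) :
    MCouter x y = (4⁻¹ : ℂ) •
      (MCouter (x + y) (x + y)
        + Complex.I • MCouter (x + Complex.I • y) (x + Complex.I • y)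
        - MCouter (x - y) (x - y)
        - Complex.I • MCouter (x - Complex.I • y) (x - Complex.I • y)) := by
  ext q r
  simp only [MCouter, Matrix.smul_apply, Matrix.sub_apply, Matrix.add_apply, Matrix.of_apply,
    Pi.add_apply, Pi.sub_apply, Pi.smul_apply, smul_eq_mul, map_add, map_sub, _root_.map_mul,
    Complex.conj_I]
  ring_nf
  simp [Complex.I_sq]
  ring

lemma MCinv_conj (t : ℝ) : (starRingEnd ℂ) (((t : ℝ) : ℂ)⁻¹) = ((t : ℝ) : ℂ)⁻¹ := by
  rw [map_inv₀, Complex.conj_ofReal]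

lemma MCouter_density (v : n → ℂ) (hv : v ≠ 0) :
    IsDensityMatrix ((((∑ i, Complex.normSq (v i) : ℝ) : ℂ))⁻¹ • MCouter v v) := by
  set t : ℝ := ∑ i, Complex.normSq (v i) with ht
  have htpos : 0 < t := MCgamma_pos hv
  have htne : (t : ℂ) ≠ 0 := by exact_mod_cast ne_of_gt htpos
  refine ⟨Matrix.PosSemidef.of_dotProduct_mulVec_nonneg (MCouter_herm v _ (MCinv_conj t)) ?_, ?_⟩
  · intro x
    have hcalc : dotProduct (star x) ((((t : ℝ) : ℂ)⁻¹ • MCouter v v) *ᵥ x)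
        = ((t⁻¹ * Complex.normSq (∑ j, (starRingEnd ℂ) (v j) * x j) : ℝ) : ℂ) := by
      set s : ℂ := ∑ j, (starRingEnd ℂ) (v j) * x j with hs
      have h1 : (MCouter v v) *ᵥ x = fun p => v p * s := by
        ext p; exact MCouter_mulVec v x p
      rw [Matrix.smul_mulVec, h1]
      have h3 : (starRingEnd ℂ) s = ∑ j, (starRingEnd ℂ) (x j) * v j := by
        rw [hs, map_sum]
        apply Finset.sum_congr rfl; intro j _
        simp only [starRingEnd_apply, star_mul', star_star]
        ring
      have h2 : dotProduct (star x) (((t : ℂ))⁻¹ • fun p => v p * s)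
          = (t : ℂ)⁻¹ * ((∑ j, (starRingEnd ℂ) (x j) * v j) * s) := by
        simp only [dotProduct, Pi.smul_apply, Pi.star_apply, smul_eq_mul,
          Finset.sum_mul, Finset.mul_sum]
        apply Finset.sum_congr rfl; intro j _
        simp only [starRingEnd_apply]
        ring
      rw [h2, ← h3, mul_comm ((starRingEnd ℂ) s) s, Complex.mul_conj]
      push_cast
      ring
    rw [hcalc]
    rw [← Complex.ofReal_zero, Complex.real_le_real]
    exact mul_nonneg (inv_nonneg.2 htpos.le) (Complex.normSq_nonneg _)
  · have : (((t : ℝ) : ℂ)⁻¹ • MCouter v v).trace = (t : ℂ)⁻¹ * (t : ℂ) := by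
      rw [Matrix.trace_smul]
      congr 1
      simp only [Matrix.trace, Matrix.diag, MCouter, Matrix.of_apply, ht]
      push_cast
      apply Finset.sum_congr rfl; intro j _
      rw [Complex.mul_conj]
    rw [this, inv_mul_cancel₀ htne]

lemma MCsingle_dot (i : n) (g : n → ℂ) :
    ∑ t, (starRingEnd ℂ) ((Pi.single i 1 : n → ℂ) t) * g t = g i := by
  rw [Finset.sum_eq_single i]
  · simp
  · intro t _ ht
    rw [Pi.single_eq_of_ne ht, map_zero, zero_mul]
  · intro h; exact absurd (Finset.mem_univ i) h

lemma MCsingle_star (i : n) : star (Pi.single i 1 : n → ℂ) = (Pi.single i 1 : n → ℂ) := by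
  funext t
  by_cases ht : t = i
  · subst ht; simp
  · simp [Pi.single_eq_of_ne ht]

lemma MCdot_as_entries {d : Type} [Fintype d] (A B : Matrix d d ℂ) (e f : d → ℂ) :
    dotProduct (star f) ((Bᴴ * A) *ᵥ e)
      = ∑ p, (A *ᵥ e) p * (starRingEnd ℂ) ((B *ᵥ f) p) := by
  rw [← Matrix.mulVec_mulVec]
  simp only [dotProduct, Matrix.mulVec, Matrix.conjTranspose_apply, Pi.star_apply,
    dotProduct, Finset.mul_sum, Finset.sum_mul, map_sum, _root_.map_mul,
    starRingEnd_apply]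
  rw [Finset.sum_comm]
  apply Finset.sum_congr rfl; intro p _
  apply Finset.sum_congr rfl; intro j _
  apply Finset.sum_congr rfl; intro x _
  ring

end Aux

theorem MC_implies_factorization
    (n m : Type) [Fintype n] [DecidableEq n] [Fintype m] [DecidableEq m]
    (U : Matrix (n × m) (n × m) ℂ) (hU : U ∈ Matrix.unitaryGroup (n × m) ℂ)
    (hMC : ∀ (ι : Type) [Fintype ι] [DecidableEq ι]
        (P : ι → Matrix n n ℂ) (μ : ι → ℝ) (A : Matrix n n ℂ),
        IsSpectralDecomp A P μ →
        ∀ ρ : Matrix (n × m) (n × m) ℂ, IsDensityMatrix ρ →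
          ptrace1 (∑ x, U * (P x ⊗ₖ (1 : Matrix m m ℂ)) * ρ *
              (P x ⊗ₖ (1 : Matrix m m ℂ)) * Uᴴ)
            = ptrace1 (U * ρ * Uᴴ)) :
    ∃ U₁ U₂, U₁ ∈ Matrix.unitaryGroup n ℂ ∧ U₂ ∈ Matrix.unitaryGroup m ℂ ∧
      U = U₁ ⊗ₖ U₂ := by
  rcases isEmpty_or_nonempty n with hn | hn
  · exact ⟨1, 1, one_mem _, one_mem _, by ext q r; exact (hn.false q.1).elim⟩
  rcases isEmpty_or_nonempty m with hm | hm
  · exact ⟨1, 1, one_mem _, one_mem _, by ext q r; exact (hm.false q.2).elim⟩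
  obtain ⟨i₀⟩ := hn
  -- Step 1: the key vanishing condition
  have key : ∀ (e f : n → ℂ), e ≠ 0 → (∑ j, (starRingEnd ℂ) (e j) * f j) = 0 →
      ∀ (k l a b : m),
        dotProduct (star f) (((MCblock U l b)ᴴ * MCblock U k a) *ᵥ e) = 0 := by
    intro e f he horth k l a b
    have hsd := MCproj_spectral e he
    set γ : ℂ := ∑ i, (starRingEnd ℂ) (e i) * e i with hγ
    set P0 : Matrix n n ℂ := γ⁻¹ • MCouter e e with hP0def
    set Pfam : Fin 2 → Matrix n n ℂ := ![P0, 1 - P0] with hPfam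
    have hMC2 := hMC (Fin 2) Pfam ![1, 0] P0 hsd
    set F : Matrix (n × m) (n × m) ℂ → Matrix m m ℂ := fun ρ =>
      ptrace1 (∑ x, U * (Pfam x ⊗ₖ (1 : Matrix m m ℂ)) * ρ *
          (Pfam x ⊗ₖ (1 : Matrix m m ℂ)) * Uᴴ)
        - ptrace1 (U * ρ * Uᴴ) with hF
    have hFdens : ∀ ρ, IsDensityMatrix ρ → F ρ = 0 := fun ρ h => sub_eq_zero_of_eq (hMC2 ρ h)
    have hFadd : ∀ ρ σ, F (ρ + σ) = F ρ + F σ := by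
      intro ρ σ
      simp only [hF, Matrix.mul_add, Matrix.add_mul, Finset.sum_add_distrib, ptrace1_add]
      abel
    have hFsmul : ∀ (c : ℂ) ρ, F (c • ρ) = c • F ρ := by
      intro c ρ
      simp only [hF, Matrix.mul_smul, Matrix.smul_mul, ← Finset.smul_sum, ptrace1_smul,
        smul_sub]
    have hFsub : ∀ ρ σ, F (ρ - σ) = F ρ - F σ := by
      intro ρ σ
      have h1 : F (-σ) = -F σ := by
        have := hFsmul (-1) σ; simpa using this
      rw [sub_eq_add_neg, hFadd, h1, sub_eq_add_neg]
    have hFself : ∀ v : (n × m) → ℂ, F (MCouter v v) = 0 := by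
      intro v
      by_cases hv : v = 0
      · have h0 : MCouter v v = 0 := by rw [hv]; exact MCouter_zero_left 0
        rw [h0]
        have := hFsmul 0 0; simpa using this
      · have hd := MCouter_density v hv
        set t : ℝ := ∑ i, Complex.normSq (v i) with ht
        have htne : ((t : ℝ) : ℂ) ≠ 0 := by
          exact_mod_cast ne_of_gt (MCgamma_pos hv)
        have h1 : MCouter v v = ((t : ℝ) : ℂ) • (((t : ℝ) : ℂ)⁻¹ • MCouter v v) := by
          rw [smul_smul, mul_inv_cancel₀ htne, one_smul]
        rw [h1, hFsmul, hFdens _ hd, smul_zero]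
    have hFouter : ∀ x y : (n × m) → ℂ, F (MCouter x y) = 0 := by
      intro x y
      rw [MCouter_polar x y, hFsmul, hFsub, hFsub, hFadd, hFsmul, hFsmul,
        hFself, hFself, hFself, hFself]
      simp
    have hPT : ptrace1 (U * MCouter (MCevec e k) (MCevec f l) * Uᴴ) = 0 := by
      have hmeas : ∀ x : Fin 2,
          U * (Pfam x ⊗ₖ (1 : Matrix m m ℂ)) * MCouter (MCevec e k) (MCevec f l) *
            (Pfam x ⊗ₖ (1 : Matrix m m ℂ)) * Uᴴ = 0 := by
        intro x
        have hP0e : P0 *ᵥ e = e := by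
          rw [hP0def, Matrix.smul_mulVec]
          funext p
          rw [Pi.smul_apply, MCouter_mulVec, ← hγ]
          field_simp [MCgamma_ne_zero he]
          rw [smul_eq_mul, one_div, ← mul_assoc, inv_mul_cancel₀ (show γ ≠ 0 from MCgamma_ne_zero he), one_mul]
        have hP0f : P0 *ᵥ f = 0 := by
          rw [hP0def, Matrix.smul_mulVec]
          funext p
          rw [Pi.smul_apply, MCouter_mulVec, horth]
          simp
        have hmid : (Pfam x ⊗ₖ (1 : Matrix m m ℂ)) * MCouter (MCevec e k) (MCevec f l) *
            (Pfam x ⊗ₖ (1 : Matrix m m ℂ)) = 0 := by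
          rw [mul_MCouter_mul, kron1_conjTranspose, kron1_mulVec_MCevec, kron1_mulVec_MCevec]
          have hherm : (Pfam x)ᴴ = Pfam x := hsd.1.1 x
          rw [hherm]
          fin_cases x
          · show MCouter (MCevec (P0 *ᵥ e) k) (MCevec (P0 *ᵥ f) l) = 0
            rw [hP0f]
            have : MCevec (0 : n → ℂ) l = 0 := by funext q; simp [MCevec]
            rw [this]
            exact MCouter_zero_right _
          · show MCouter (MCevec ((1 - P0) *ᵥ e) k) (MCevec ((1 - P0) *ᵥ f) l) = 0
            have h10 : (1 - P0) *ᵥ e = 0 := by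
              rw [Matrix.sub_mulVec, Matrix.one_mulVec, hP0e, sub_self]
            rw [h10]
            have : MCevec (0 : n → ℂ) k = 0 := by funext q; simp [MCevec]
            rw [this]
            exact MCouter_zero_left _
        calc U * (Pfam x ⊗ₖ (1 : Matrix m m ℂ)) * MCouter (MCevec e k) (MCevec f l) *
              (Pfam x ⊗ₖ (1 : Matrix m m ℂ)) * Uᴴ
            = U * ((Pfam x ⊗ₖ (1 : Matrix m m ℂ)) * MCouter (MCevec e k) (MCevec f l) *
              (Pfam x ⊗ₖ (1 : Matrix m m ℂ))) * Uᴴ := by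
              simp only [Matrix.mul_assoc]
          _ = 0 := by rw [hmid, mul_zero, zero_mul]
      have h2 := hFouter (MCevec e k) (MCevec f l)
      rw [hF] at h2
      simp only at h2
      rw [Finset.sum_eq_zero (fun x _ => hmeas x), ptrace1_zero, zero_sub,
        neg_eq_zero] at h2
      exact h2
    -- extract the entry (a, b)
    have hent : ∑ p, (U *ᵥ MCevec e k) (p, a) * (starRingEnd ℂ) ((U *ᵥ MCevec f l) (p, b)) = 0 := by
      have h3 : U * MCouter (MCevec e k) (MCevec f l) * Uᴴ
          = MCouter (U *ᵥ MCevec e k) (Uᴴᴴ *ᵥ MCevec f l) := mul_MCouter_mul U Uᴴ _ _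
      rw [Matrix.conjTranspose_conjTranspose] at h3
      have h4 := congrFun (congrFun (congrArg (fun M => (M : Matrix m m ℂ)) hPT) a) b
      rw [h3] at h4
      simpa [ptrace1, MCouter] using h4
    rw [MCdot_as_entries]
    rw [← hent]
    apply Finset.sum_congr rfl
    intro p _
    rw [mulVec_MCevec, mulVec_MCevec]
  -- Step 2: every block Gram matrix is scalar
  have hT : ∀ (k a l b : m), (MCblock U l b)ᴴ * MCblock U k a
      = (((MCblock U l b)ᴴ * MCblock U k a) i₀ i₀) • (1 : Matrix n n ℂ) := by
    intro k a l b
    set T : Matrix n n ℂ := (MCblock U l b)ᴴ * MCblock U k a with hTdef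
    have hoff : ∀ i j : n, i ≠ j → T j i = 0 := by
      intro i j hij
      have h1 := key (Pi.single i 1) (Pi.single j 1)
        (by
          intro h
          have := congrFun h i
          simp at this)
        (by
          rw [Finset.sum_eq_zero]
          intro t _
          by_cases ht : t = i
          · subst ht
            rw [Pi.single_eq_of_ne hij, mul_zero]
          · rw [Pi.single_eq_of_ne ht, map_zero, zero_mul])
        k l a b
      rw [MCsingle_star, ← hTdef, Matrix.mulVec_single, single_dotProduct] at h1
      simpa using h1
    have hdiag : ∀ i j : n, i ≠ j → T i i = T j j := by
      intro i j hij
      have h1 := key (Pi.single i 1 + Pi.single j 1) (Pi.single i 1 - Pi.single j 1)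
        (by
          intro h
          have := congrFun h i
          simp [Pi.single_eq_of_ne hij] at this)
        (by
          have hgen : ∀ g : n → ℂ,
              ∑ t, (starRingEnd ℂ) ((Pi.single i 1 + Pi.single j 1 : n → ℂ) t) * g t
                = g i + g j := by
            intro g
            simp only [Pi.add_apply, map_add, add_mul, Finset.sum_add_distrib, MCsingle_dot]
          rw [hgen]
          simp [Pi.single_eq_of_ne hij, Pi.single_eq_of_ne (Ne.symm hij)])
        k l a b
      have hstar : star (Pi.single i 1 - Pi.single j 1 : n → ℂ)
          = (Pi.single i 1 - Pi.single j 1 : n → ℂ) := by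
        rw [star_sub, MCsingle_star, MCsingle_star]
      rw [hstar, ← hTdef, sub_dotProduct, single_dotProduct,
        single_dotProduct, Matrix.mulVec_add, Matrix.mulVec_single,
        Matrix.mulVec_single] at h1
      simp only [Pi.add_apply, Pi.smul_apply, Matrix.col_apply, MulOpposite.op_one, one_smul, one_mul, mul_one] at h1
      rw [hoff i j hij, hoff j i (Ne.symm hij)] at h1
      have h2 : T i i - T j j = 0 := by
        rw [← h1]; ring
      exact sub_eq_zero.mp h2
    ext j i
    by_cases hij : j = i
    · subst hij
      by_cases hj : j = i₀
      · subst hj; simp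
      · rw [hdiag j i₀ hj]
        simp
    · rw [hoff i j (Ne.symm hij), Matrix.smul_apply, Matrix.one_apply_ne hij, smul_zero]
  -- Step 3: construct the factorization
  obtain ⟨k₀⟩ := hm
  have h1U : Uᴴ * U = 1 := by
    have := Matrix.mem_unitaryGroup_iff'.mp hU
    rwa [Matrix.star_eq_conjTranspose] at this
  have hex : ∃ k a, MCblock U k a ≠ 0 := by
    by_contra h
    push_neg at h
    have hU0 : U = 0 := by
      ext q r'
      obtain ⟨p, a⟩ := q; obtain ⟨i, k⟩ := r'
      have := congrFun (congrFun (h k a) p) i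
      simpa [MCblock] using this
    rw [hU0] at h1U
    have h2 := congrFun (congrFun h1U (i₀, k₀)) (i₀, k₀)
    simp at h2
  obtain ⟨kz, az, hAne⟩ := hex
  set A0 : Matrix n n ℂ := MCblock U kz az with hA0
  set lam0 : ℂ := (A0ᴴ * A0) i₀ i₀ with hlam0
  have hAA : A0ᴴ * A0 = lam0 • 1 := hT kz az kz az
  have hlamne : lam0 ≠ 0 := by
    intro h0
    rw [h0, zero_smul] at hAA
    exact hAne (Matrix.conjTranspose_mul_self_eq_zero.mp hAA)
  set s : ℝ := ∑ p, Complex.normSq (A0 p i₀) with hs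
  have hlam_eq : lam0 = (s : ℂ) := by
    rw [hlam0, hs]
    simp only [Matrix.mul_apply, Matrix.conjTranspose_apply]
    push_cast
    apply Finset.sum_congr rfl; intro p _
    rw [Complex.normSq_eq_conj_mul_self, starRingEnd_apply]
  have hsne : (s : ℂ) ≠ 0 := by rw [← hlam_eq]; exact hlamne
  have hspos : 0 < s := by
    have h0 : 0 ≤ s := Finset.sum_nonneg fun p _ => Complex.normSq_nonneg _
    rcases h0.lt_or_eq with h | h
    · exact h
    · exact absurd (by rw [← h]; norm_num : (s : ℂ) = 0) hsne
  set r : ℝ := Real.sqrt s with hr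
  have hrpos : 0 < r := Real.sqrt_pos.mpr hspos
  have hrne : ((r : ℝ) : ℂ) ≠ 0 := by exact_mod_cast ne_of_gt hrpos
  have hrr : ((r : ℝ) : ℂ) * ((r : ℝ) : ℂ) = ((s : ℝ) : ℂ) := by
    rw [← Complex.ofReal_mul, Real.mul_self_sqrt hspos.le]
  set V : Matrix n n ℂ := ((r : ℝ) : ℂ)⁻¹ • A0 with hV
  have hVH : Vᴴ = ((r : ℝ) : ℂ)⁻¹ • A0ᴴ := by
    rw [hV, Matrix.conjTranspose_smul]
    congr 1
    have := MCinv_conj r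
    rwa [starRingEnd_apply] at this
  have hVV : Vᴴ * V = 1 := by
    rw [hVH, hV, Matrix.smul_mul, Matrix.mul_smul, hAA, smul_smul, smul_smul, hlam_eq]
    have hc : ((r : ℝ) : ℂ)⁻¹ * ((r : ℝ) : ℂ)⁻¹ * ((s : ℝ) : ℂ) = 1 := by
      field_simp
      rw [← hrr]; ring
    rw [hc, one_smul]
  have hVmem : V ∈ Matrix.unitaryGroup n ℂ := by
    rw [Matrix.mem_unitaryGroup_iff', Matrix.star_eq_conjTranspose]
    exact hVV
  have hVVH : V * Vᴴ = 1 := by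
    have := Matrix.mem_unitaryGroup_iff.mp hVmem
    rwa [Matrix.star_eq_conjTranspose] at this
  have hblock : ∀ k a, MCblock U k a
      = (((r : ℝ) : ℂ)⁻¹ * ((A0ᴴ * MCblock U k a) i₀ i₀)) • V := by
    intro k a
    have h1 : Vᴴ * MCblock U k a
        = (((r : ℝ) : ℂ)⁻¹ * ((A0ᴴ * MCblock U k a) i₀ i₀)) • 1 := by
      have e1 : (((A0ᴴ * MCblock U k a) i₀ i₀) • (1 : Matrix n n ℂ)) i₀ i₀
          = (A0ᴴ * MCblock U k a) i₀ i₀ := by simp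
      rw [hVH, Matrix.smul_mul, hT k a kz az, smul_smul, e1]
    calc MCblock U k a = (V * Vᴴ) * MCblock U k a := by rw [hVVH, one_mul]
      _ = V * (Vᴴ * MCblock U k a) := by rw [Matrix.mul_assoc]
      _ = (((r : ℝ) : ℂ)⁻¹ * ((A0ᴴ * MCblock U k a) i₀ i₀)) • V := by
          rw [h1, Matrix.mul_smul, mul_one]
  set U₂ : Matrix m m ℂ :=
    Matrix.of (fun a k => ((r : ℝ) : ℂ)⁻¹ * ((A0ᴴ * MCblock U k a) i₀ i₀)) with hU₂
  have hfact : U = V ⊗ₖ U₂ := by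
    ext q r'
    obtain ⟨p, a⟩ := q; obtain ⟨i, k⟩ := r'
    have h1 : U (p, a) (i, k)
        = ((((r : ℝ) : ℂ)⁻¹ * ((A0ᴴ * MCblock U k a) i₀ i₀)) • V) p i :=
      congrFun (congrFun (hblock k a) p) i
    rw [Matrix.kroneckerMap_apply, h1]
    simp only [Matrix.smul_apply, smul_eq_mul, hU₂, Matrix.of_apply]
    ring
  have h3 : ∑ p, (starRingEnd ℂ) (V p i₀) * V p i₀ = 1 := by
    have e1 : ∑ p, (starRingEnd ℂ) (V p i₀) * V p i₀ = ∑ p, Vᴴ i₀ p * V p i₀ := by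
      apply Finset.sum_congr rfl; intro p _
      rw [Matrix.conjTranspose_apply, starRingEnd_apply]
    rw [e1, ← Matrix.mul_apply, hVV, Matrix.one_apply_eq]
  have hU2 : U₂ᴴ * U₂ = 1 := by
    ext k k'
    have h4 : (∑ p, (starRingEnd ℂ) (V p i₀) * V p i₀) *
        (∑ a, (starRingEnd ℂ) (U₂ a k) * U₂ a k')
        = (1 : Matrix (n × m) (n × m) ℂ) (i₀, k) (i₀, k') := by
      rw [Finset.sum_mul_sum]
      rw [← h1U, hfact]
      simp only [Matrix.mul_apply, Matrix.conjTranspose_apply, Matrix.kroneckerMap_apply,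
        Fintype.sum_prod_type, starRingEnd_apply, star_mul']
      apply Finset.sum_congr rfl; intro p _
      apply Finset.sum_congr rfl; intro a _
      ring
    rw [h3, one_mul] at h4
    have h5 : (U₂ᴴ * U₂) k k' = ∑ a, (starRingEnd ℂ) (U₂ a k) * U₂ a k' := by
      rw [Matrix.mul_apply]
      apply Finset.sum_congr rfl; intro a _
      rw [Matrix.conjTranspose_apply, starRingEnd_apply]
    rw [h5, h4]
    by_cases hk : k = k'
    · subst hk; simp
    · rw [Matrix.one_apply_ne hk, Matrix.one_apply_ne (by simp [hk] : (i₀, k) ≠ (i₀, k'))]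
  have hU2mem : U₂ ∈ Matrix.unitaryGroup m ℂ := by
    rw [Matrix.mem_unitaryGroup_iff', Matrix.star_eq_conjTranspose]
    exact hU2
  exact ⟨V, U₂, hVmem, hU2mem, hfact⟩
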